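/- Let a, b, c > 0 and let γ_a be Gamma(a)-distributed and β_{b,c} Beta(b,c)-distributed, independent. Then for all λ > 0: E[exp(−λ γ_a / β_{b,c})] = (Γ(a+b)Γ(b+c))/(Γ(b)Γ(a+b+c)) · λ^{−a} · F(a, a+b, a+b+c; −1/λ), where F is the Gauss hypergeometric function given by its Euler integral representation F(α,δ,γ;z) = Γ(γ)/(Γ(δ)Γ(γ−δ)) ∫₀¹ t^{δ−1}(1−t)^{γ−δ−1}(1−tz)^{−α} dt. -/

import Mathlib

open MeasureTheory Set Real

/-- Euler integral representation of the Gauss hypergeometric function. -/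
noncomputable def gaussF (α δ γ z : ℝ) : ℝ :=
  (Real.Gamma γ / (Real.Gamma δ * Real.Gamma (γ - δ))) *
    ∫ t in Ioo (0:ℝ) 1, t ^ (δ - 1) * (1 - t) ^ (γ - δ - 1) * (1 - t * z) ^ (-α)

lemma gammaInt (a r : ℝ) (ha : 0 < a) (hr : 0 < r) :
    IntegrableOn (fun x : ℝ => x ^ (a - 1) * Real.exp (-(r * x))) (Ioi 0) := by
  have := integrableOn_rpow_mul_exp_neg_mul_rpow (p := 1) (s := a - 1) (by linarith) zero_lt_one hr
  refine this.congr_fun (fun x hx => ?_) measurableSet_Ioi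
  beta_reduce
  rw [Real.rpow_one, neg_mul]

lemma betaIntLeft (p q : ℝ) (hp : -1 < p) :
    IntervalIntegrable (fun x : ℝ => x ^ p * (1 - x) ^ q) volume 0 (1/2) := by
  apply IntervalIntegrable.mul_continuousOn
  · exact intervalIntegral.intervalIntegrable_rpow' hp
  · apply ContinuousOn.rpow_const (by fun_prop)
    intro x hx
    rw [uIcc_of_le (by norm_num : (0:ℝ) ≤ 1/2)] at hx
    left
    have := hx.2
    intro h
    have : x = 1 := by linarith [sub_eq_zero.mp h]
    linarith

lemma betaIntegrable (p q : ℝ) (hp : -1 < p) (hq : -1 < q) :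
    IntegrableOn (fun t : ℝ => t ^ p * (1 - t) ^ q) (Ioo 0 1) := by
  have h1 := betaIntLeft p q hp
  have h2 : IntervalIntegrable (fun x : ℝ => x ^ p * (1 - x) ^ q) volume (1/2) 1 := by
    rw [IntervalIntegrable.iff_comp_neg]
    convert ((betaIntLeft q p hq).comp_add_right 1).symm using 1
    · ext1 x
      conv_lhs => rw [mul_comm]
      congr 2 <;> ring
    · norm_num
    · norm_num
  have h := h1.trans h2
  rwa [intervalIntegrable_iff_integrableOn_Ioo_of_le (by norm_num)] at h

theorem laplace_gamma_over_beta (a b c l : ℝ) (ha : 0 < a) (hb : 0 < b)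
    (hc : 0 < c) (hl : 0 < l) :
    (∫ x in Ioi (0:ℝ), ∫ t in Ioo (0:ℝ) 1,
        Real.exp (-(l * x / t)) * (x ^ (a - 1) * Real.exp (-x) / Real.Gamma a) *
          (t ^ (b - 1) * (1 - t) ^ (c - 1) *
            (Real.Gamma (b + c) / (Real.Gamma b * Real.Gamma c))))
      = (Real.Gamma (a + b) * Real.Gamma (b + c)) /
          (Real.Gamma b * Real.Gamma (a + b + c)) * l ^ (-a) *
          gaussF a (a + b) (a + b + c) (-1 / l) := by
  have hGa : (0:ℝ) < Real.Gamma a := Real.Gamma_pos_of_pos ha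
  have hGb : (0:ℝ) < Real.Gamma b := Real.Gamma_pos_of_pos hb
  have hGc : (0:ℝ) < Real.Gamma c := Real.Gamma_pos_of_pos hc
  have hGab : (0:ℝ) < Real.Gamma (a + b) := Real.Gamma_pos_of_pos (by linarith)
  have hGbc : (0:ℝ) < Real.Gamma (b + c) := Real.Gamma_pos_of_pos (by linarith)
  have hGabc : (0:ℝ) < Real.Gamma (a + b + c) := Real.Gamma_pos_of_pos (by linarith)
  set K : ℝ := Real.Gamma (b + c) / (Real.Gamma b * Real.Gamma c) with hK
  have hKpos : 0 < K := by positivity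
  set f : ℝ → ℝ → ℝ := fun x t =>
    Real.exp (-(l * x / t)) * (x ^ (a - 1) * Real.exp (-x) / Real.Gamma a) *
      (t ^ (b - 1) * (1 - t) ^ (c - 1) * K) with hf
  -- pointwise rewrite of f for t > 0, as a gamma-type integrand in x
  have hfe : ∀ t : ℝ, 0 < t → ∀ x : ℝ,
      f x t = (t ^ (b - 1) * (1 - t) ^ (c - 1) * K / Real.Gamma a) *
        (x ^ (a - 1) * Real.exp (-((l / t + 1) * x))) := by
    intro t ht x
    have he : -((l / t + 1) * x) = -(l * x / t) + -x := by field_simp; ring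
    rw [hf]
    simp only
    rw [he, Real.exp_add]
    field_simp
  -- inner integral over x, for fixed t ∈ (0,1)
  have hr : ∀ t : ℝ, 0 < t → (0:ℝ) < l / t + 1 := fun t ht => by positivity
  have inner : ∀ t ∈ Ioo (0:ℝ) 1, ∫ x in Ioi (0:ℝ), f x t
      = t ^ (b - 1) * (1 - t) ^ (c - 1) * K * (t / (t + l)) ^ a := by
    intro t ht
    have ht0 := ht.1
    rw [setIntegral_congr_fun measurableSet_Ioi (fun x _ => hfe t ht0 x),
      integral_const_mul, integral_rpow_mul_exp_neg_mul_Ioi ha (hr t ht0)]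
    have hbase : 1 / (l / t + 1) = t / (t + l) := by
      rw [div_add' _ _ _ ht0.ne', one_div_div]
      ring_nf
    rw [hbase]
    field_simp
  -- integrability of fun t => f x t'closure: the t-marginal after integrating x
  have hDint : IntegrableOn (fun t : ℝ => t ^ (b-1) * (1-t) ^ (c-1)) (Ioo (0:ℝ) 1) :=
    betaIntegrable _ _ (by linarith) (by linarith)
  -- measurability of f on the product
  have hmeas : AEStronglyMeasurable (fun p : ℝ × ℝ => f p.1 p.2)
      ((volume.restrict (Ioi (0:ℝ))).prod (volume.restrict (Ioo (0:ℝ) 1))) := by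
    rw [hf]
    apply Measurable.aestronglyMeasurable
    fun_prop
  -- integrability on the product
  have hint : Integrable (fun p : ℝ × ℝ => f p.1 p.2)
      ((volume.restrict (Ioi (0:ℝ))).prod (volume.restrict (Ioo (0:ℝ) 1))) := by
    rw [integrable_prod_iff' hmeas]
    constructor
    · filter_upwards [ae_restrict_mem measurableSet_Ioo] with t ht
      have := ((gammaInt a (l / t + 1) ha (hr t ht.1)).const_mul
        (t ^ (b - 1) * (1 - t) ^ (c - 1) * K / Real.Gamma a))
      apply this.congr
      filter_upwards [ae_restrict_mem measurableSet_Ioi] with x _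
      exact (hfe t ht.1 x).symm
    · have hnorm : (fun t => ∫ x in Ioi (0:ℝ), ‖f x t‖)
          =ᵐ[volume.restrict (Ioo (0:ℝ) 1)]
          (fun t => t ^ (b-1) * (1-t) ^ (c-1) * K * (t / (t + l)) ^ a) := by
        filter_upwards [ae_restrict_mem measurableSet_Ioo] with t ht
        rw [← inner t ht]
        refine setIntegral_congr_fun measurableSet_Ioi (fun x hx => ?_)
        have hx0 : (0:ℝ) < x := hx
        have h1t : (0:ℝ) < 1 - t := by linarith [ht.2]
        refine Real.norm_of_nonneg ?_
        rw [hf]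
        exact mul_nonneg (mul_nonneg (Real.exp_pos _).le
          (by positivity))
          (mul_nonneg (mul_nonneg (Real.rpow_nonneg ht.1.le _)
            (Real.rpow_nonneg h1t.le _)) hKpos.le)
      refine Integrable.congr ?_ hnorm.symm
      have hgm : AEStronglyMeasurable
          (fun t : ℝ => t ^ (b-1) * (1-t) ^ (c-1) * K * (t / (t + l)) ^ a)
          (volume.restrict (Ioo (0:ℝ) 1)) := by
        apply Measurable.aestronglyMeasurable; fun_prop
      refine Integrable.mono (hDint.mul_const K) hgm ?_
      filter_upwards [ae_restrict_mem measurableSet_Ioo] with t ht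
      have ht0 := ht.1
      have h1t : (0:ℝ) < 1 - t := by linarith [ht.2]
      have hfrac : t / (t + l) ≤ 1 := by
        rw [div_le_one (by positivity)]; linarith
      have hfp : (0:ℝ) ≤ t / (t + l) := by positivity
      rw [Real.norm_of_nonneg (by positivity), Real.norm_of_nonneg (by positivity)]
      calc t ^ (b-1) * (1-t) ^ (c-1) * K * (t / (t + l)) ^ a
          ≤ t ^ (b-1) * (1-t) ^ (c-1) * K * 1 := by
            gcongr
            exact Real.rpow_le_one hfp hfrac ha.le
        _ = t ^ (b-1) * (1-t) ^ (c-1) * K := by ring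
  -- Fubini
  have hswap := MeasureTheory.integral_integral_swap (f := f) hint
  rw [show (∫ x in Ioi (0:ℝ), ∫ t in Ioo (0:ℝ) 1,
        Real.exp (-(l * x / t)) * (x ^ (a - 1) * Real.exp (-x) / Real.Gamma a) *
          (t ^ (b - 1) * (1 - t) ^ (c - 1) *
            (Real.Gamma (b + c) / (Real.Gamma b * Real.Gamma c))))
      = ∫ x in Ioi (0:ℝ), ∫ t in Ioo (0:ℝ) 1, f x t from rfl, hswap]
  rw [setIntegral_congr_fun measurableSet_Ioo inner]
  -- pointwise transformation of the t-integrand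
  have hpt : ∀ t ∈ Ioo (0:ℝ) 1,
      t ^ (b - 1) * (1 - t) ^ (c - 1) * K * (t / (t + l)) ^ a
      = (K * l ^ (-a)) *
        (t ^ (a + b - 1) * (1 - t) ^ (a + b + c - (a + b) - 1) * (1 - t * (-1 / l)) ^ (-a)) := by
    intro t ht
    have ht0 := ht.1
    have htl : (0:ℝ) < t + l := by positivity
    have h1 : (t / (t + l)) ^ a = t ^ a / (t + l) ^ a :=
      Real.div_rpow ht0.le htl.le a
    have h2 : (1 - t * (-1 / l)) = (t + l) / l := by field_simp; ring
    have h3 : ((t + l) / l) ^ (-a) = (t + l) ^ (-a) / l ^ (-a) :=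
      Real.div_rpow htl.le hl.le (-a)
    have h4 : t ^ (a + b - 1) = t ^ a * t ^ (b - 1) := by
      rw [← Real.rpow_add ht0]; ring_nf
    have h5 : a + b + c - (a + b) - 1 = c - 1 := by ring
    have h6 : (t + l) ^ (-a) = ((t + l) ^ a)⁻¹ := by
      rw [Real.rpow_neg htl.le]
    have h7 : (l:ℝ) ^ (-a) = (l ^ a)⁻¹ := by rw [Real.rpow_neg hl.le]
    have hla : (0:ℝ) < l ^ a := Real.rpow_pos_of_pos hl a
    have htla : (0:ℝ) < (t + l) ^ a := Real.rpow_pos_of_pos htl a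
    rw [h1, h2, h3, h4, h5, h6, h7]
    field_simp
  rw [setIntegral_congr_fun measurableSet_Ioo hpt, integral_const_mul]
  -- now compare constants
  rw [gaussF]
  have h5 : a + b + c - (a + b) = c := by ring
  rw [h5]
  have hla : (0:ℝ) < l ^ (-a) := Real.rpow_pos_of_pos hl _
  rw [hK]
  field_simp [hGb.ne', hGc.ne', hGab.ne', hGabc.ne']
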